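/- arXiv:2206.01293 — 2 statements merged into one kernel-verified Lean document; each statement's English description precedes it below -/
import Mathlib

section
/- Consider two finite-horizon MDPs M and M' over the same finite state space S and action space A, with horizon H, transition kernels P_h and P'_h, and reward functions r_h, r'_h taking values in [0,1]. Suppose for all s, a, h: Σ_{s'} |P_h(s'|s,a) - P'_h(s'|s,a)| ≤ ε₁ and |r_h(s,a) - r'_h(s,a)| ≤ ε₂. Then for any (non-stationary, deterministic) policy π and any initial state s₁, the difference in expected total reward satisfies |V₁^π(s₁; M) - V₁^π(s₁; M')| ≤ H(H-1)/2 · ε₁ + H · ε₂. -/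
/-- Value function of a finite-horizon MDP: `val H P r π h s` is the expected sum of
rewards from round `h` to `H - 1` starting at state `s` and following policy `π`. -/
noncomputable def val {S A : Type} [Fintype S] (H : ℕ) (P : ℕ → S → A → S → ℝ)
    (r : ℕ → S → A → ℝ) (π : ℕ → S → A) : ℕ → S → ℝ := fun h s =>
  if hh : h < H then
    r h s (π h s) + ∑ s' : S, P h s (π h s) s' * val H P r π (h + 1) s'
  else 0
termination_by h => H - h
decreasing_by omega

lemma val_bounds {S A : Type} [Fintype S] (H : ℕ) (P : ℕ → S → A → S → ℝ)
    (r : ℕ → S → A → ℝ) (π : ℕ → S → A)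
    (hP : ∀ h s a s', 0 ≤ P h s a s') (hP1 : ∀ h s a, ∑ s' : S, P h s a s' = 1)
    (hr : ∀ h s a, r h s a ∈ Set.Icc (0 : ℝ) 1) :
    ∀ h s, 0 ≤ val H P r π h s ∧ val H P r π h s ≤ ((H - h : ℕ) : ℝ) := by
  intro h s
  by_cases hh : h < H
  · rw [val]
    simp only [hh, dif_pos]
    have IH := fun s' => val_bounds H P r π hP hP1 hr (h + 1) s'
    obtain ⟨hr0, hr1⟩ := hr h s (π h s)
    constructor
    · have : (0:ℝ) ≤ ∑ s' : S, P h s (π h s) s' * val H P r π (h + 1) s' :=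
        Finset.sum_nonneg fun s' _ => mul_nonneg (hP _ _ _ _) (IH s').1
      linarith
    · have hb : ∑ s' : S, P h s (π h s) s' * val H P r π (h + 1) s'
          ≤ ∑ s' : S, P h s (π h s) s' * ((H - (h+1) : ℕ) : ℝ) :=
        Finset.sum_le_sum fun s' _ => mul_le_mul_of_nonneg_left (IH s').2 (hP _ _ _ _)
      rw [← Finset.sum_mul, hP1, one_mul] at hb
      have : ((H - h : ℕ) : ℝ) = ((H - (h+1) : ℕ) : ℝ) + 1 := by
        have : H - h = (H - (h+1)) + 1 := by omega
        rw [this]; push_cast; ring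
      linarith
  · rw [val]; simp [hh]
termination_by h => H - h
decreasing_by omega

lemma val_diff {S A : Type} [Fintype S] (H : ℕ) (ε₁ ε₂ : ℝ)
    (P P' : ℕ → S → A → S → ℝ) (r r' : ℕ → S → A → ℝ) (π : ℕ → S → A)
    (hP : ∀ h s a s', 0 ≤ P h s a s') (hP1 : ∀ h s a, ∑ s' : S, P h s a s' = 1)
    (hP' : ∀ h s a s', 0 ≤ P' h s a s') (hP1' : ∀ h s a, ∑ s' : S, P' h s a s' = 1)
    (hr : ∀ h s a, r h s a ∈ Set.Icc (0 : ℝ) 1)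
    (hr' : ∀ h s a, r' h s a ∈ Set.Icc (0 : ℝ) 1)
    (hPclose : ∀ h s a, ∑ s' : S, |P h s a s' - P' h s a s'| ≤ ε₁)
    (hrclose : ∀ h s a, |r h s a - r' h s a| ≤ ε₂) :
    ∀ h s, |val H P r π h s - val H P' r' π h s| ≤
      ((H - h : ℕ) : ℝ) * ((H - h : ℕ) - 1) / 2 * ε₁ + ((H - h : ℕ) : ℝ) * ε₂ := by
  intro h s
  by_cases hh : h < H
  · have hε₂ : 0 ≤ ε₂ := le_trans (abs_nonneg _) (hrclose h s (π h s))
    rw [val, val]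
    simp only [hh, dif_pos]
    set a := π h s
    have IH := fun s' => val_diff H ε₁ ε₂ P P' r r' π hP hP1 hP' hP1' hr hr' hPclose hrclose (h+1) s'
    set m : ℕ := H - (h + 1) with hm
    have hcast : ((H - h : ℕ) : ℝ) = (m : ℝ) + 1 := by
      have : H - h = m + 1 := by omega
      rw [this]; push_cast; ring
    -- bound the sum difference
    have key : |∑ s' : S, P h s a s' * val H P r π (h+1) s'
        - ∑ s' : S, P' h s a s' * val H P' r' π (h+1) s'|
        ≤ ((m:ℝ) * ((m:ℝ) - 1) / 2 * ε₁ + (m:ℝ) * ε₂) + (m:ℝ) * ε₁ := by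
      have hsplit : ∑ s' : S, P h s a s' * val H P r π (h+1) s'
          - ∑ s' : S, P' h s a s' * val H P' r' π (h+1) s'
          = ∑ s' : S, (P h s a s' * (val H P r π (h+1) s' - val H P' r' π (h+1) s')
              + (P h s a s' - P' h s a s') * val H P' r' π (h+1) s') := by
        rw [← Finset.sum_sub_distrib]
        exact Finset.sum_congr rfl fun s' _ => by ring
      rw [hsplit]
      calc |∑ s' : S, (P h s a s' * (val H P r π (h+1) s' - val H P' r' π (h+1) s')
              + (P h s a s' - P' h s a s') * val H P' r' π (h+1) s')|
          ≤ ∑ s' : S, |P h s a s' * (val H P r π (h+1) s' - val H P' r' π (h+1) s')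
              + (P h s a s' - P' h s a s') * val H P' r' π (h+1) s'| :=
            Finset.abs_sum_le_sum_abs _ _
        _ ≤ ∑ s' : S, (P h s a s' * (((m:ℝ) * ((m:ℝ) - 1) / 2 * ε₁ + (m:ℝ) * ε₂))
              + |P h s a s' - P' h s a s'| * (m:ℝ)) := by
            apply Finset.sum_le_sum
            intro s' _
            refine (abs_add_le _ _).trans (add_le_add ?_ ?_)
            · rw [abs_mul, abs_of_nonneg (hP _ _ _ _)]
              exact mul_le_mul_of_nonneg_left (IH s') (hP _ _ _ _)
            · rw [abs_mul]
              apply mul_le_mul_of_nonneg_left _ (abs_nonneg _)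
              obtain ⟨h0, h1⟩ := val_bounds H P' r' π hP' hP1' hr' (h+1) s'
              rw [abs_of_nonneg h0]; exact h1
        _ = ((m:ℝ) * ((m:ℝ) - 1) / 2 * ε₁ + (m:ℝ) * ε₂)
              + (∑ s' : S, |P h s a s' - P' h s a s'|) * (m:ℝ) := by
            rw [Finset.sum_add_distrib, ← Finset.sum_mul, ← Finset.sum_mul, hP1, one_mul]
        _ ≤ ((m:ℝ) * ((m:ℝ) - 1) / 2 * ε₁ + (m:ℝ) * ε₂) + ε₁ * (m:ℝ) := by
            have := hPclose h s a
            have hm0 : (0:ℝ) ≤ (m:ℝ) := Nat.cast_nonneg m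
            nlinarith
        _ = ((m:ℝ) * ((m:ℝ) - 1) / 2 * ε₁ + (m:ℝ) * ε₂) + (m:ℝ) * ε₁ := by ring
    have habs : |r h s a + ∑ s' : S, P h s a s' * val H P r π (h+1) s'
        - (r' h s a + ∑ s' : S, P' h s a s' * val H P' r' π (h+1) s')|
        ≤ |r h s a - r' h s a| + |∑ s' : S, P h s a s' * val H P r π (h+1) s'
            - ∑ s' : S, P' h s a s' * val H P' r' π (h+1) s'| := by
      have := abs_add_le (r h s a - r' h s a)
        (∑ s' : S, P h s a s' * val H P r π (h+1) s'
          - ∑ s' : S, P' h s a s' * val H P' r' π (h+1) s')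
      convert this using 2
      · rfl
      · rfl
      ring
    have hrc := hrclose h s a
    rw [hcast]
    calc _ ≤ _ := habs
      _ ≤ ε₂ + (((m:ℝ) * ((m:ℝ) - 1) / 2 * ε₁ + (m:ℝ) * ε₂) + (m:ℝ) * ε₁) :=
          add_le_add hrc key
      _ = ((m:ℝ) + 1) * (((m:ℝ) + 1) - 1) / 2 * ε₁ + ((m:ℝ) + 1) * ε₂ := by ring
  · rw [val, val]
    simp only [hh, dif_neg, not_false_iff, sub_zero, abs_zero]
    have : H - h = 0 := by omega
    rw [this]
    have hε₁ : 0 ≤ ε₁ := le_trans (Finset.sum_nonneg fun s' _ => abs_nonneg _) (hPclose h s (π h s))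
    have hε₂ : 0 ≤ ε₂ := le_trans (abs_nonneg _) (hrclose h s (π h s))
    push_cast; nlinarith
termination_by h => H - h
decreasing_by omega

theorem stmt_9 {S A : Type} [Fintype S] (H : ℕ) (ε₁ ε₂ : ℝ)
    (P P' : ℕ → S → A → S → ℝ) (r r' : ℕ → S → A → ℝ) (π : ℕ → S → A)
    (hP : ∀ h s a s', 0 ≤ P h s a s') (hP1 : ∀ h s a, ∑ s' : S, P h s a s' = 1)
    (hP' : ∀ h s a s', 0 ≤ P' h s a s') (hP1' : ∀ h s a, ∑ s' : S, P' h s a s' = 1)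
    (hr : ∀ h s a, r h s a ∈ Set.Icc (0 : ℝ) 1)
    (hr' : ∀ h s a, r' h s a ∈ Set.Icc (0 : ℝ) 1)
    (hPclose : ∀ h s a, ∑ s' : S, |P h s a s' - P' h s a s'| ≤ ε₁)
    (hrclose : ∀ h s a, |r h s a - r' h s a| ≤ ε₂)
    (s₁ : S) :
    |val H P r π 0 s₁ - val H P' r' π 0 s₁| ≤ H * (H - 1) / 2 * ε₁ + H * ε₂ := by
  have := val_diff H ε₁ ε₂ P P' r r' π hP hP1 hP' hP1' hr hr' hPclose hrclose 0 s₁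
  simpa using this
end

section
/- In the simulation lemma setting, the inductive step holds: if for all states s', |V_{h+1}^π(s'; M) - V_{h+1}^π(s'; M')| ≤ (H-h-1)(H-h)/2 · ε₁ + (H-h)ε₂, and transitions/rewards differ by at most ε₁ (in total variation, doubled) and ε₂ respectively, and 0 ≤ V_{h+1}^π(·; M) ≤ H - h, then |V_h^π(s; M) - V_h^π(s; M')| ≤ (H-h)(H-h+1)/2 · ε₁ + (H-h+1)ε₂ for all s. -/
theorem stmt_10 {S A : Type} [Fintype S] (H h : ℕ) (hh : h < H) (ε₁ ε₂ : ℝ)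
    (P P' : S → A → S → ℝ) (r r' : S → A → ℝ) (π : S → A)
    (V V' Vnext Vnext' : S → ℝ)
    (hBell : ∀ s, V s = r s (π s) + ∑ s' : S, P s (π s) s' * Vnext s')
    (hBell' : ∀ s, V' s = r' s (π s) + ∑ s' : S, P' s (π s) s' * Vnext' s')
    (hP' : ∀ s a s', 0 ≤ P' s a s') (hP1' : ∀ s a, ∑ s' : S, P' s a s' = 1)
    (hPclose : ∀ s a, ∑ s' : S, |P s a s' - P' s a s'| ≤ ε₁)
    (hrclose : ∀ s a, |r s a - r' s a| ≤ ε₂)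
    (hVnext : ∀ s', 0 ≤ Vnext s' ∧ Vnext s' ≤ (H : ℝ) - h)
    (hIH : ∀ s', |Vnext s' - Vnext' s'| ≤
      ((H : ℝ) - h - 1) * ((H : ℝ) - h) / 2 * ε₁ + ((H : ℝ) - h) * ε₂) :
    ∀ s, |V s - V' s| ≤
      ((H : ℝ) - h) * ((H : ℝ) - h + 1) / 2 * ε₁ + ((H : ℝ) - h + 1) * ε₂ := by
  intro s
  set a := π s with ha
  have hε₁ : 0 ≤ ε₁ := le_trans (Finset.sum_nonneg fun _ _ => abs_nonneg _) (hPclose s a)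
  have hε₂ : 0 ≤ ε₂ := le_trans (abs_nonneg _) (hrclose s a)
  have hx : (h : ℝ) + 1 ≤ (H : ℝ) := by exact_mod_cast hh
  set C := ((H : ℝ) - h - 1) * ((H : ℝ) - h) / 2 * ε₁ + ((H : ℝ) - h) * ε₂ with hC
  clear_value C
  have hA : |∑ s' : S, (P s a s' - P' s a s') * Vnext s'| ≤ ((H : ℝ) - h) * ε₁ := by
    calc |∑ s' : S, (P s a s' - P' s a s') * Vnext s'|
        ≤ ∑ s' : S, |(P s a s' - P' s a s') * Vnext s'| := Finset.abs_sum_le_sum_abs _ _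
      _ ≤ ∑ s' : S, |P s a s' - P' s a s'| * ((H : ℝ) - h) := by
          apply Finset.sum_le_sum
          intro s' _
          rw [abs_mul, abs_of_nonneg (hVnext s').1]
          exact mul_le_mul_of_nonneg_left (hVnext s').2 (abs_nonneg _)
      _ = (∑ s' : S, |P s a s' - P' s a s'|) * ((H : ℝ) - h) := by
          rw [Finset.sum_mul]
      _ ≤ ε₁ * ((H : ℝ) - h) := by
          apply mul_le_mul_of_nonneg_right (hPclose s a); linarith
      _ = ((H : ℝ) - h) * ε₁ := mul_comm _ _
  have hB : |∑ s' : S, P' s a s' * (Vnext s' - Vnext' s')| ≤ C := by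
    calc |∑ s' : S, P' s a s' * (Vnext s' - Vnext' s')|
        ≤ ∑ s' : S, |P' s a s' * (Vnext s' - Vnext' s')| := Finset.abs_sum_le_sum_abs _ _
      _ ≤ ∑ s' : S, P' s a s' * C := by
          apply Finset.sum_le_sum
          intro s' _
          rw [abs_mul, abs_of_nonneg (hP' s a s')]
          exact mul_le_mul_of_nonneg_left (hIH s') (hP' s a s')
      _ = (∑ s' : S, P' s a s') * C := by rw [Finset.sum_mul]
      _ = C := by rw [hP1' s a, one_mul]
  have hsplit : (∑ s' : S, P s a s' * Vnext s') - (∑ s' : S, P' s a s' * Vnext' s') =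
      (∑ s' : S, (P s a s' - P' s a s') * Vnext s') +
      (∑ s' : S, P' s a s' * (Vnext s' - Vnext' s')) := by
    rw [← Finset.sum_add_distrib, ← Finset.sum_sub_distrib]
    apply Finset.sum_congr rfl
    intro s' _
    ring
  have e : V s - V' s = (r s a - r' s a) +
      ((∑ s' : S, (P s a s' - P' s a s') * Vnext s') +
       (∑ s' : S, P' s a s' * (Vnext s' - Vnext' s'))) := by
    rw [hBell s, hBell' s]
    linarith [hsplit]
  have h1 := hrclose s a
  have habs1 := abs_add_le (r s a - r' s a)
    ((∑ s' : S, (P s a s' - P' s a s') * Vnext s') +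
     (∑ s' : S, P' s a s' * (Vnext s' - Vnext' s')))
  have habs2 := abs_add_le (∑ s' : S, (P s a s' - P' s a s') * Vnext s')
    (∑ s' : S, P' s a s' * (Vnext s' - Vnext' s'))
  have hfin : ε₂ + ((H : ℝ) - h) * ε₁ + C =
      ((H : ℝ) - h) * ((H : ℝ) - h + 1) / 2 * ε₁ + ((H : ℝ) - h + 1) * ε₂ := by
    rw [hC]; ring
  rw [e]
  linarith
end
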